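/- Let G be a strongly connected directed graph with diameter at most D, a a vertex, and m > 1 an integer such that every closed walk in a given set P_a of closed walks through a has length divisible by m, but some closed walk p' through a has length not divisible by m, where P_a contains, for every vertex v, a closed walk of length d(a,v) + d(v,a). Then there exists an index i along p' such that d(a, p'_{i+1}) - d(a, p'_i) ≢ 1 (mod m), and consequently there exists a closed walk through a of length at most 2D+1 whose length is not divisible by m (namely: shortest walk a→p'_i, the edge p'_i→p'_{i+1}, shortest walk p'_{i+1}→a). -/
import Mathlib


/-- There is a directed walk of length `k` from `u` to `v` along relation `R`. -/
def HasWalk {V : Type*} (R : V → V → Prop) (u v : V) (k : ℕ) : Prop :=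
  ∃ f : ℕ → V, f 0 = u ∧ f k = v ∧ ∀ i < k, R (f i) (f (i + 1))

/-- Length of a shortest directed walk from `u` to `v`. -/
noncomputable def wdist {V : Type*} (R : V → V → Prop) (u v : V) : ℕ :=
  sInf {k | HasWalk R u v k}

lemma hasWalk_trans {V : Type*} {R : V → V → Prop} {u v w : V} {k l : ℕ}
    (h1 : HasWalk R u v k) (h2 : HasWalk R v w l) : HasWalk R u w (k + l) := by
  obtain ⟨f, hf0, hfk, hfe⟩ := h1
  obtain ⟨g, hg0, hgl, hge⟩ := h2
  refine ⟨fun j => if j ≤ k then f j else g (j - k), by simp [hf0], ?_, ?_⟩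
  · by_cases h : l = 0
    · simp [h, hfk, ← hg0, h ▸ hgl]
    · have : ¬ (k + l ≤ k) := by omega
      simp [this, hgl]
  · intro j hj
    by_cases h : j + 1 ≤ k
    · have hj' : j ≤ k := by omega
      simp only [h, hj', if_pos]
      exact hfe j (by omega)
    · have hjk : k ≤ j := by omega
      have h1 : (if j ≤ k then f j else g (j - k)) = g (j - k) := by
        by_cases hc : j ≤ k
        · have : j = k := le_antisymm hc hjk
          simp [hc, this, hfk, ← hg0]
        · simp [hc]
      have h2 : (if j + 1 ≤ k then f (j+1) else g (j + 1 - k)) = g (j - k + 1) := by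
        have : j + 1 - k = j - k + 1 := by omega
        simp [h, this]
      simp only [h1, h2]
      exact hge (j - k) (by omega)

/-- If every loop through `a` built from shortest walks has length divisible by `m`,
but some closed walk through `a` (given by `f`, of length `L`) has length not divisible
by `m`, then along that walk some step fails the congruence
`wdist a f(i) + 1 ≡ wdist a f(i+1) (mod m)`, and there is a closed walk through `a` of
length at most `2D + 1` whose length is not divisible by `m`. -/
theorem exists_short_nondivisible_loop {V : Type*} [Fintype V] (R : V → V → Prop)
    (D : ℕ)
    (hSC : ∀ u v : V, ∃ k, 0 < k ∧ HasWalk R u v k)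
    (hdiam : ∀ u v : V, ∃ k ≤ D, HasWalk R u v k)
    (a : V) (m : ℕ) (hm : 1 < m)
    (hPa : ∀ v : V, m ∣ (wdist R a v + wdist R v a))
    (L : ℕ) (hL : 0 < L) (f : ℕ → V) (hf0 : f 0 = a) (hfL : f L = a)
    (hedge : ∀ i < L, R (f i) (f (i + 1)))
    (hndiv : ¬ m ∣ L) :
    (∃ i < L,
      ¬ ((wdist R a (f i) : ℤ) + 1 ≡ (wdist R a (f (i + 1)) : ℤ) [ZMOD (m : ℤ)])) ∧
    (∃ l, 0 < l ∧ l ≤ 2 * D + 1 ∧ HasWalk R a a l ∧ ¬ m ∣ l) := by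
  have hne : ∀ u v : V, {k | HasWalk R u v k}.Nonempty := by
    intro u v
    obtain ⟨k, _, hk⟩ := hdiam u v
    exact ⟨k, hk⟩
  have hmem : ∀ u v : V, HasWalk R u v (wdist R u v) := fun u v => Nat.sInf_mem (hne u v)
  have hleD : ∀ u v : V, wdist R u v ≤ D := by
    intro u v
    obtain ⟨k, hkD, hk⟩ := hdiam u v
    exact le_trans (Nat.sInf_le hk) hkD
  have hstep : ∃ i < L,
      ¬ ((wdist R a (f i) : ℤ) + 1 ≡ (wdist R a (f (i + 1)) : ℤ) [ZMOD (m : ℤ)]) := by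
    by_contra hcon
    push_neg at hcon
    have key : ∀ n, n ≤ L →
        ((wdist R a (f n) : ℤ)) ≡ (wdist R a (f 0) : ℤ) + n [ZMOD (m : ℤ)] := by
      intro n
      induction n with
      | zero => intro _; simp [Int.ModEq.refl]
      | succ n ih =>
        intro hn
        have h1 := hcon n (by omega)
        have h2 := ih (by omega)
        calc ((wdist R a (f (n+1)) : ℤ)) ≡ (wdist R a (f n) : ℤ) + 1 [ZMOD (m : ℤ)] :=
              h1.symm
          _ ≡ ((wdist R a (f 0) : ℤ) + n) + 1 [ZMOD (m : ℤ)] := h2.add_right 1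
          _ = (wdist R a (f 0) : ℤ) + (n + 1 : ℕ) := by push_cast; ring
    have hfin := key L le_rfl
    have heq : wdist R a (f L) = wdist R a (f 0) := by rw [hfL, hf0]
    rw [heq] at hfin
    have h' : (m : ℤ) ∣ (L : ℤ) := by simpa using Int.ModEq.dvd hfin
    exact hndiv (Int.natCast_dvd_natCast.mp h')
  refine ⟨hstep, ?_⟩
  obtain ⟨i, hi, hnc⟩ := hstep
  set d1 := wdist R a (f i) with hd1
  set d2 := wdist R a (f (i + 1)) with hd2
  set d3 := wdist R (f (i + 1)) a with hd3
  refine ⟨d1 + 1 + d3, by omega, ?_, ?_, ?_⟩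
  · have := hleD a (f i); have := hleD (f (i+1)) a; omega
  · have w1 : HasWalk R a (f i) d1 := hmem a (f i)
    have we : HasWalk R (f i) (f (i + 1)) 1 :=
      ⟨fun j => if j = 0 then f i else f (i + 1), by simp, by simp, by
        intro j hj
        have : j = 0 := by omega
        simp [this]
        exact hedge i hi⟩
    have w3 : HasWalk R (f (i + 1)) a d3 := hmem (f (i + 1)) a
    exact hasWalk_trans (hasWalk_trans w1 we) w3
  · intro hdvd
    apply hnc
    have h1 : (m : ℤ) ∣ ((d1 : ℤ) + 1 + d3) := by exact_mod_cast Int.natCast_dvd_natCast.mpr hdvd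
    have h2 : (m : ℤ) ∣ ((d2 : ℤ) + d3) := by exact_mod_cast Int.natCast_dvd_natCast.mpr (hPa (f (i+1)))
    rw [Int.modEq_iff_dvd]
    have : ((d2 : ℤ)) - ((d1 : ℤ) + 1) = ((d2 : ℤ) + d3) - ((d1 : ℤ) + 1 + d3) := by ring
    rw [this]
    exact dvd_sub h2 h1
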